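/- Let $G = (V, E)$ and $G' = (V, E')$ be two graphs on the same $n$-element vertex set, each with at least $(5/9 + \alpha) n^2 / 2$ edges, where $\alpha > 0$. Let $U \subseteq V$ with $|U| \ge 2n/3$, let $R = G[U]$, and suppose $e_G(U, V \setminus U) \le \alpha n^2 / 4$. Then the number of ordered pairs $(u, v) \in U^2$ such that $uv \in E \cap E'$ and $d_R(v) > n/3$ is at least $\frac{3}{4} \alpha n^2$. -/

import Mathlib

set_option maxHeartbeats 1000000

open Finset

lemma pair_count {V : Type*} [DecidableEq V] (U : Finset V) (Pd : V → V → Prop)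
    [∀ u v, Decidable (Pd u v)] :
    ((U ×ˢ U).filter (fun p => Pd p.1 p.2)).card
      = ∑ v ∈ U, (U.filter (fun u => Pd u v)).card := by
  rw [Finset.card_filter, Finset.sum_product, Finset.sum_comm]
  refine Finset.sum_congr rfl fun v _ => ?_
  rw [Finset.card_filter]

lemma star_real (N m al : ℝ) (hal : 0 ≤ al) (hN : 0 ≤ N)
    (hm : 2*N/3 ≤ m) (hmn : m ≤ N)
    (hTq : N^2/3 - 3*(N-m)^2 + 9/4*al*N^2 ≤ (m - N/3)*N) :
    N^2*((N-m)^2 + m^2/2 - N^2/3 - al*N^2/4) ≤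
      (m-N/3)*N*(N^2/3 - 3*(N-m)^2 + 9/4*al*N^2)
        - (N^2/3 - 3*(N-m)^2 + 9/4*al*N^2)^2/2 := by
  have e1 : (0:ℝ) ≤ N - m := by linarith
  have e2 : (0:ℝ) ≤ N - 3*(N-m) := by linarith
  have h1 : 0 ≤ (N-m)*(N-3*(N-m))*((3/2)*((N-m)-N/6)^2+(5/8)*N^2) :=
    mul_nonneg (mul_nonneg e1 e2) (by positivity)
  have h2 : 0 ≤ (9/8)*al*N^2*((m - N/3)*N - (N^2/3 - 3*(N-m)^2 + 9/4*al*N^2)) :=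
    mul_nonneg (by positivity) (by linarith)
  have h3 : 0 ≤ al*N^2*((27/8)*((N-m)-N/6)^2+(17/32)*N^2) := by positivity
  linarith [h1, h2, h3]

lemma key_real (N al m σ A B P Q g : ℝ)
    (hal : 0 < al) (hN : 0 ≤ N)
    (hm : 2*N/3 ≤ m) (hmn : m ≤ N)
    (hσ0 : 0 ≤ σ)
    (H1 : (5/9+al)*N^2 - al*N^2/2 - (N-m)^2 ≤ A)
    (H2 : (5/9+al)*N^2 - (N^2 - m^2) ≤ B)
    (H3 : A + B - m^2 - σ*N/3 ≤ g)
    (H4 : P + Q - (m-σ)*m ≤ g)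
    (H5 : A - σ*N/3 ≤ P)
    (H6 : B - σ^2 ≤ 2*Q)
    (H7 : A ≤ σ*N/3 + (m-σ)*m) :
    3/4*al*N^2 ≤ g := by
  by_cases hcase : σ*N ≤ N^2/3 - 3*(N-m)^2 + 9/4*al*N^2
  · linarith
  · push_neg at hcase
    have hN0 : 0 < N := by
      rcases hN.lt_or_eq with h|h
      · exact h
      · exfalso
        have hm0 : m = 0 := by linarith
        rw [hm0, ← h] at hcase
        norm_num at hcase
    have hq : σ * (m - N/3) ≤ (m - N/3)^2 := by nlinarith
    have hq' : σ ≤ m - N/3 := by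
      have h3 : 0 < m - N/3 := by linarith
      nlinarith
    have hσNq : σ * N ≤ (m - N/3)*N := by
      have := mul_le_mul_of_nonneg_right hq' hN
      linarith
    have hTq : N^2/3 - 3*(N-m)^2 + 9/4*al*N^2 ≤ (m - N/3)*N := by linarith
    have prod : 0 ≤ (σ*N - (N^2/3 - 3*(N-m)^2 + 9/4*al*N^2))
        * (2*(m-N/3)*N - σ*N - (N^2/3 - 3*(N-m)^2 + 9/4*al*N^2)) := by
      apply mul_nonneg
      · linarith
      · linarith
    have star := star_real N m al hal.le hN hm hmn hTq
    have final2 : N^2*(3/4*al*N^2) ≤ N^2*g := by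
      linarith [mul_le_mul_of_nonneg_left H4 (sq_nonneg N),
        mul_le_mul_of_nonneg_left H5 (sq_nonneg N),
        mul_le_mul_of_nonneg_left H6 (sq_nonneg N),
        mul_le_mul_of_nonneg_left H1 (sq_nonneg N),
        mul_le_mul_of_nonneg_left H2 (sq_nonneg N),
        prod, star]
    have hN2 : (0:ℝ) < N^2 := by positivity
    exact le_of_mul_le_mul_left final2 hN2

theorem stmt_2 {V : Type*} [Fintype V] [DecidableEq V] (n : ℕ)
    (hn : Fintype.card V = n) (α : ℝ) (hα : 0 < α)
    (G G' : SimpleGraph V) [DecidableRel G.Adj] [DecidableRel G'.Adj]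
    (hG : ((5 : ℝ)/9 + α) * n^2 / 2 ≤ G.edgeFinset.card)
    (hG' : ((5 : ℝ)/9 + α) * n^2 / 2 ≤ G'.edgeFinset.card)
    (U : Finset V) (hU : (2 : ℝ) * n / 3 ≤ U.card)
    (hcut : (((univ : Finset (V × V)).filter
        (fun p => p.1 ∈ U ∧ p.2 ∉ U ∧ G.Adj p.1 p.2)).card : ℝ) ≤ α * n^2 / 4) :
    (3 : ℝ)/4 * α * n^2 ≤
      (((U ×ˢ U).filter (fun p => G.Adj p.1 p.2 ∧ G'.Adj p.1 p.2 ∧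
          ((n : ℝ)/3 < (U.filter (fun u => G.Adj p.2 u)).card))).card : ℝ) := by
  classical
  set a : V → ℕ := fun v => (U.filter (fun u => G.Adj v u)).card with ha
  set b : V → ℕ := fun v => (U.filter (fun u => G'.Adj v u)).card with hb
  set f : V → ℕ := fun v => (U.filter (fun u => G.Adj v u ∧ G'.Adj v u)).card with hf
  set m : ℕ := U.card with hm
  have hmn : m ≤ n := by rw [← hn]; exact Finset.card_le_univ U
  -- rewrite the goal count as a sum over L
  have hgood : (((U ×ˢ U).filter (fun p => G.Adj p.1 p.2 ∧ G'.Adj p.1 p.2 ∧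
          ((n : ℝ)/3 < (U.filter (fun u => G.Adj p.2 u)).card))).card)
      = ∑ v ∈ U.filter (fun v => n < 3 * a v), f v := by
    rw [pair_count U (fun u v => G.Adj u v ∧ G'.Adj u v ∧
        ((n : ℝ)/3 < (U.filter (fun w => G.Adj v w)).card)), Finset.sum_filter]
    refine Finset.sum_congr rfl fun v _ => ?_
    have hiff : ((n : ℝ)/3 < ((U.filter (fun w => G.Adj v w)).card : ℝ)) ↔ n < 3 * a v := by
      rw [div_lt_iff₀ (by norm_num : (0:ℝ) < 3), ha]
      constructor
      · intro h; exact_mod_cast (by linarith : (n:ℝ) < 3 * ((U.filter (fun u => G.Adj v u)).card : ℝ))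
      · intro h
        have : (n:ℝ) < 3 * ((U.filter (fun u => G.Adj v u)).card : ℝ) := by exact_mod_cast h
        linarith
    by_cases hc : n < 3 * a v
    · rw [if_pos hc]
      have : U.filter (fun u => G.Adj u v ∧ G'.Adj u v ∧
          ((n : ℝ)/3 < (U.filter (fun w => G.Adj v w)).card))
          = U.filter (fun u => G.Adj v u ∧ G'.Adj v u) := by
        apply Finset.filter_congr
        intro u _
        constructor
        · rintro ⟨h1, h2, _⟩; exact ⟨h1.symm, h2.symm⟩
        · rintro ⟨h1, h2⟩; exact ⟨h1.symm, h2.symm, hiff.2 hc⟩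
      rw [this, hf]
    · rw [if_neg hc]
      have : U.filter (fun u => G.Adj u v ∧ G'.Adj u v ∧
          ((n : ℝ)/3 < (U.filter (fun w => G.Adj v w)).card)) = ∅ := by
        apply Finset.filter_false_of_mem
        intro u _
        intro hcontr
        exact hc (hiff.1 hcontr.2.2)
      rw [this, Finset.card_empty]

  set L : Finset V := U.filter (fun v => n < 3 * a v) with hLdef
  set S : Finset V := U.filter (fun v => ¬ n < 3 * a v) with hSdef
  -- pointwise facts
  have hfa : ∀ v, f v ≤ a v := by
    intro v
    apply Finset.card_le_card
    intro u hu; simp only [Finset.mem_filter] at hu ⊢; exact ⟨hu.1, hu.2.1⟩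
  have ham : ∀ v, a v ≤ m := fun v => Finset.card_filter_le U _
  have hab : ∀ v, a v + b v ≤ f v + m := by
    intro v
    have hXY : U.filter (fun u => G.Adj v u ∧ G'.Adj v u)
        = U.filter (fun u => G.Adj v u) ∩ U.filter (fun u => G'.Adj v u) :=
      Finset.filter_and _ _ _
    have h2 := Finset.card_union_add_card_inter
      (U.filter (fun u => G.Adj v u)) (U.filter (fun u => G'.Adj v u))
    have h3 : (U.filter (fun u => G.Adj v u) ∪ U.filter (fun u => G'.Adj v u)).card ≤ m := by
      apply Finset.card_le_card
      intro u hu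
      rcases Finset.mem_union.1 hu with h | h
      · exact Finset.mem_of_mem_filter u h
      · exact Finset.mem_of_mem_filter u h
    simp only [ha, hb, hf]
    rw [hXY]
    omega
  -- partition sums
  have hpart : ∀ (x : V → ℕ), ∑ v ∈ U, x v = ∑ v ∈ L, x v + ∑ v ∈ S, x v :=
    fun x => (Finset.sum_filter_add_sum_filter_not U _ x).symm
  have hLS : L.card + S.card = m := Finset.card_filter_add_card_filter_not _
  have hSa : 3 * (∑ v ∈ S, a v) ≤ S.card * n := by
    rw [Finset.mul_sum]
    calc ∑ v ∈ S, 3 * a v ≤ ∑ v ∈ S, n := by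
          apply Finset.sum_le_sum
          intro v hv
          rw [hSdef] at hv
          have := (Finset.mem_filter.1 hv).2
          omega
      _ = S.card * n := by rw [Finset.sum_const, smul_eq_mul]
  have hLa : ∑ v ∈ L, a v ≤ L.card * m := by
    calc ∑ v ∈ L, a v ≤ ∑ v ∈ L, m := Finset.sum_le_sum (fun v _ => ham v)
      _ = L.card * m := by rw [Finset.sum_const, smul_eq_mul]
  -- edge count for G
  have hA2 : 2 * G.edgeFinset.card
      = (((univ : Finset V) ×ˢ (univ : Finset V)).filter (fun p => G.Adj p.1 p.2)).card := by
    rw [pair_count (univ : Finset V) (fun u v => G.Adj u v),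
      ← SimpleGraph.sum_degrees_eq_twice_card_edges]
    refine Finset.sum_congr rfl fun v _ => ?_
    rw [SimpleGraph.degree]
    congr 1
    ext u
    simp [SimpleGraph.adj_comm]
  have hAU : ((U ×ˢ U).filter (fun p => G.Adj p.1 p.2)).card = ∑ v ∈ U, a v := by
    rw [pair_count]
    refine Finset.sum_congr rfl fun v _ => ?_
    rw [ha]
    congr 1
    apply Finset.filter_congr
    intro u _
    constructor
    · exact fun h => h.symm
    · exact fun h => h.symm
  have hswap : ((univ : Finset (V × V)).filter
        (fun p => p.1 ∉ U ∧ p.2 ∈ U ∧ G.Adj p.1 p.2)).card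
      = ((univ : Finset (V × V)).filter
        (fun p => p.1 ∈ U ∧ p.2 ∉ U ∧ G.Adj p.1 p.2)).card := by
    apply Finset.card_bij' (fun p _ => Prod.swap p) (fun p _ => Prod.swap p)
    · intro p hp
      simp only [Finset.mem_filter, Finset.mem_univ, true_and] at *
      exact ⟨hp.2.1, hp.1, hp.2.2.symm⟩
    · intro p hp
      simp only [Finset.mem_filter, Finset.mem_univ, true_and] at *
      exact ⟨hp.2.1, hp.1, hp.2.2.symm⟩
    · intro p _; simp
    · intro p _; simp
  have hObb : (((univ : Finset V) \ U) ×ˢ ((univ : Finset V) \ U)).card = (n - m)*(n - m) := by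
    rw [Finset.card_product, Finset.card_sdiff_of_subset (Finset.subset_univ U), Finset.card_univ, hn, hm]
  have hsubsetG : (((univ : Finset V) ×ˢ (univ : Finset V)).filter (fun p => G.Adj p.1 p.2)) ⊆
      (((U ×ˢ U).filter (fun p => G.Adj p.1 p.2)) ∪
        ((univ : Finset (V × V)).filter (fun p => p.1 ∈ U ∧ p.2 ∉ U ∧ G.Adj p.1 p.2)) ∪
        ((univ : Finset (V × V)).filter (fun p => p.1 ∉ U ∧ p.2 ∈ U ∧ G.Adj p.1 p.2))) ∪
      (((univ : Finset V) \ U) ×ˢ ((univ : Finset V) \ U)) := by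
    intro p hp
    have hadj : G.Adj p.1 p.2 := (Finset.mem_filter.1 hp).2
    simp only [Finset.mem_union, Finset.mem_filter, Finset.mem_product, Finset.mem_sdiff,
      Finset.mem_univ, true_and]
    by_cases h1 : p.1 ∈ U <;> by_cases h2 : p.2 ∈ U <;> tauto
  have F7N : 2 * G.edgeFinset.card ≤ (∑ v ∈ U, a v)
      + 2 * ((univ : Finset (V × V)).filter
          (fun p => p.1 ∈ U ∧ p.2 ∉ U ∧ G.Adj p.1 p.2)).card
      + (n - m)*(n - m) := by
    have h := Finset.card_le_card hsubsetG
    have h2 := Finset.card_union_le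
      ((((U ×ˢ U).filter (fun p => G.Adj p.1 p.2)) ∪
        ((univ : Finset (V × V)).filter (fun p => p.1 ∈ U ∧ p.2 ∉ U ∧ G.Adj p.1 p.2)) ∪
        ((univ : Finset (V × V)).filter (fun p => p.1 ∉ U ∧ p.2 ∈ U ∧ G.Adj p.1 p.2))))
      ((((univ : Finset V) \ U) ×ˢ ((univ : Finset V) \ U)))
    have h3 := Finset.card_union_le
      (((U ×ˢ U).filter (fun p => G.Adj p.1 p.2)) ∪
        ((univ : Finset (V × V)).filter (fun p => p.1 ∈ U ∧ p.2 ∉ U ∧ G.Adj p.1 p.2)))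
      ((univ : Finset (V × V)).filter (fun p => p.1 ∉ U ∧ p.2 ∈ U ∧ G.Adj p.1 p.2))
    have h4 := Finset.card_union_le
      ((U ×ˢ U).filter (fun p => G.Adj p.1 p.2))
      ((univ : Finset (V × V)).filter (fun p => p.1 ∈ U ∧ p.2 ∉ U ∧ G.Adj p.1 p.2))
    rw [hA2]
    omega
  -- edge count for G'
  have hB2 : 2 * G'.edgeFinset.card
      = (((univ : Finset V) ×ˢ (univ : Finset V)).filter (fun p => G'.Adj p.1 p.2)).card := by
    rw [pair_count (univ : Finset V) (fun u v => G'.Adj u v),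
      ← SimpleGraph.sum_degrees_eq_twice_card_edges]
    refine Finset.sum_congr rfl fun v _ => ?_
    rw [SimpleGraph.degree]
    congr 1
    ext u
    simp [SimpleGraph.adj_comm]
  have hBU : ((U ×ˢ U).filter (fun p => G'.Adj p.1 p.2)).card = ∑ v ∈ U, b v := by
    rw [pair_count]
    refine Finset.sum_congr rfl fun v _ => ?_
    rw [hb]
    congr 1
    apply Finset.filter_congr
    intro u _
    constructor
    · exact fun h => h.symm
    · exact fun h => h.symm
  have hsubsetG' : (((univ : Finset V) ×ˢ (univ : Finset V)).filter (fun p => G'.Adj p.1 p.2)) ⊆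
      ((U ×ˢ U).filter (fun p => G'.Adj p.1 p.2)) ∪
        (((univ : Finset V) ×ˢ (univ : Finset V)) \ (U ×ˢ U)) := by
    intro p hp
    have hadj : G'.Adj p.1 p.2 := (Finset.mem_filter.1 hp).2
    by_cases h : p ∈ U ×ˢ U
    · exact Finset.mem_union_left _ (Finset.mem_filter.2 ⟨h, hadj⟩)
    · exact Finset.mem_union_right _ (Finset.mem_sdiff.2 ⟨(Finset.mem_filter.1 hp).1, h⟩)
  have hprodsub : (U ×ˢ U) ⊆ ((univ : Finset V) ×ˢ (univ : Finset V)) :=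
    Finset.product_subset_product (Finset.subset_univ U) (Finset.subset_univ U)
  have hsdcard : (((univ : Finset V) ×ˢ (univ : Finset V)) \ (U ×ˢ U)).card = n*n - m*m := by
    rw [Finset.card_sdiff_of_subset hprodsub, Finset.card_product, Finset.card_product,
      Finset.card_univ, hn, hm]
  have hmmnn : m*m ≤ n*n := Nat.mul_le_mul hmn hmn
  have F8N : 2 * G'.edgeFinset.card + m*m ≤ (∑ v ∈ U, b v) + n*n := by
    have h := Finset.card_le_card hsubsetG'
    have h2 := Finset.card_union_le ((U ×ˢ U).filter (fun p => G'.Adj p.1 p.2))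
      (((univ : Finset V) ×ˢ (univ : Finset V)) \ (U ×ˢ U))
    rw [hB2]
    omega
  -- F9: sum over S of b
  have hdisj : Disjoint L S := Finset.disjoint_filter_filter_not U U _
  have hbsplit : ∀ v, b v = (L.filter (fun u => G'.Adj v u)).card
      + (S.filter (fun u => G'.Adj v u)).card := by
    intro v
    simp only [hb]
    have hU' : U = L ∪ S := (Finset.filter_union_filter_not_eq _ U).symm
    rw [hU', Finset.filter_union, Finset.card_union_of_disjoint]
    exact Finset.disjoint_filter_filter hdisj
  have hswap2 : ∑ v ∈ S, (L.filter (fun u => G'.Adj v u)).card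
      = ∑ v ∈ L, (S.filter (fun u => G'.Adj v u)).card := by
    simp_rw [Finset.card_filter]
    rw [Finset.sum_comm]
    refine Finset.sum_congr rfl fun u _ => Finset.sum_congr rfl fun v _ => ?_
    exact if_congr ⟨fun h => h.symm, fun h => h.symm⟩ rfl rfl
  have F9N : ∑ v ∈ S, b v ≤ S.card * S.card + ∑ v ∈ L, b v := by
    have h1 : ∑ v ∈ S, b v = ∑ v ∈ S, (L.filter (fun u => G'.Adj v u)).card
        + ∑ v ∈ S, (S.filter (fun u => G'.Adj v u)).card := by
      rw [← Finset.sum_add_distrib]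
      exact Finset.sum_congr rfl fun v _ => hbsplit v
    have h2 : ∑ v ∈ S, (S.filter (fun u => G'.Adj v u)).card ≤ S.card * S.card := by
      calc ∑ v ∈ S, (S.filter (fun u => G'.Adj v u)).card ≤ ∑ v ∈ S, S.card :=
            Finset.sum_le_sum (fun v _ => Finset.card_filter_le S _)
        _ = S.card * S.card := by rw [Finset.sum_const, smul_eq_mul]
    have h3 : ∑ v ∈ L, (S.filter (fun u => G'.Adj v u)).card ≤ ∑ v ∈ L, b v := by
      apply Finset.sum_le_sum
      intro v _
      rw [hb]
      exact Finset.card_le_card (Finset.filter_subset_filter _ (Finset.filter_subset _ U))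
    rw [h1, hswap2]
    omega
  -- sums of the pointwise inequality
  have FUab : ∑ v ∈ U, a v + ∑ v ∈ U, b v ≤ ∑ v ∈ U, f v + m * m := by
    have h := Finset.sum_le_sum (fun v (_ : v ∈ U) => hab v)
    rw [Finset.sum_add_distrib, Finset.sum_add_distrib, Finset.sum_const, smul_eq_mul] at h
    rw [hm] at h ⊢
    omega
  have FLab : ∑ v ∈ L, a v + ∑ v ∈ L, b v ≤ ∑ v ∈ L, f v + L.card * m := by
    have h := Finset.sum_le_sum (fun v (_ : v ∈ L) => hab v)
    rw [Finset.sum_add_distrib, Finset.sum_add_distrib, Finset.sum_const, smul_eq_mul] at h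
    omega
  have FSf : ∑ v ∈ S, f v ≤ ∑ v ∈ S, a v := Finset.sum_le_sum (fun v _ => hfa v)
  -- now real casts
  rw [hgood]
  have hmR : (2:ℝ) * n / 3 ≤ (m:ℝ) := hU
  have hmnR : (m:ℝ) ≤ (n:ℝ) := by exact_mod_cast hmn
  have hnm : ((n - m : ℕ) : ℝ) = (n:ℝ) - (m:ℝ) := by
    rw [Nat.cast_sub hmn]
  have hLSR : (L.card : ℝ) + (S.card : ℝ) = (m : ℝ) := by exact_mod_cast hLS
  have hGe : ((5:ℝ)/9 + α) * (n:ℝ)^2 ≤ 2 * (G.edgeFinset.card : ℝ) := by linarith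
  have hG'e : ((5:ℝ)/9 + α) * (n:ℝ)^2 ≤ 2 * (G'.edgeFinset.card : ℝ) := by linarith
  have H1 : ((5:ℝ)/9+α)*(n:ℝ)^2 - α*(n:ℝ)^2/2 - ((n:ℝ)-(m:ℝ))^2 ≤ ((∑ v ∈ U, a v : ℕ) : ℝ) := by
    have c1 : ((2 * G.edgeFinset.card : ℕ) : ℝ) ≤ ((∑ v ∈ U, a v : ℕ) : ℝ)
        + 2 * (((univ : Finset (V × V)).filter
            (fun p => p.1 ∈ U ∧ p.2 ∉ U ∧ G.Adj p.1 p.2)).card : ℝ)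
        + (((n-m)*(n-m) : ℕ) : ℝ) := by exact_mod_cast F7N
    push_cast [hnm] at c1
    push_cast
    nlinarith [c1, hGe, hcut]
  have H2 : ((5:ℝ)/9+α)*(n:ℝ)^2 - ((n:ℝ)^2 - (m:ℝ)^2) ≤ ((∑ v ∈ U, b v : ℕ) : ℝ) := by
    have c1 : ((2 * G'.edgeFinset.card + m*m : ℕ) : ℝ) ≤ ((∑ v ∈ U, b v : ℕ) : ℝ)
        + ((n*n : ℕ) : ℝ) := by exact_mod_cast F8N
    push_cast at c1
    push_cast
    nlinarith [c1, hG'e]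
  have hSaR : 3 * ((∑ v ∈ S, a v : ℕ) : ℝ) ≤ (S.card : ℝ) * (n : ℝ) := by exact_mod_cast hSa
  have H3 : ((∑ v ∈ U, a v : ℕ) : ℝ) + ((∑ v ∈ U, b v : ℕ) : ℝ) - (m:ℝ)^2
      - (S.card : ℝ) * (n:ℝ)/3 ≤ ((∑ v ∈ L, f v : ℕ) : ℝ) := by
    have c1 : ((∑ v ∈ U, a v : ℕ) : ℝ) + ((∑ v ∈ U, b v : ℕ) : ℝ)
        ≤ ((∑ v ∈ U, f v : ℕ) : ℝ) + (m:ℝ) * (m:ℝ) := by exact_mod_cast FUab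
    have c2 : ((∑ v ∈ U, f v : ℕ) : ℝ) = ((∑ v ∈ L, f v : ℕ) : ℝ)
        + ((∑ v ∈ S, f v : ℕ) : ℝ) := by exact_mod_cast hpart f
    have c3 : ((∑ v ∈ S, f v : ℕ) : ℝ) ≤ ((∑ v ∈ S, a v : ℕ) : ℝ) := by exact_mod_cast FSf
    nlinarith [c1, c2, c3, hSaR]
  have H4 : ((∑ v ∈ L, a v : ℕ) : ℝ) + ((∑ v ∈ L, b v : ℕ) : ℝ)
      - ((m:ℝ) - (S.card:ℝ)) * (m:ℝ) ≤ ((∑ v ∈ L, f v : ℕ) : ℝ) := by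
    have c1 : ((∑ v ∈ L, a v : ℕ) : ℝ) + ((∑ v ∈ L, b v : ℕ) : ℝ)
        ≤ ((∑ v ∈ L, f v : ℕ) : ℝ) + (L.card : ℝ) * (m:ℝ) := by exact_mod_cast FLab
    have c4 : (L.card : ℝ) = (m:ℝ) - (S.card:ℝ) := by linarith [hLSR]
    have c5 : (L.card : ℝ) * (m:ℝ) = ((m:ℝ) - (S.card:ℝ)) * (m:ℝ) := by rw [c4]
    linarith [c1, c5]
  have H5 : ((∑ v ∈ U, a v : ℕ) : ℝ) - (S.card : ℝ) * (n:ℝ)/3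
      ≤ ((∑ v ∈ L, a v : ℕ) : ℝ) := by
    have c2 : ((∑ v ∈ U, a v : ℕ) : ℝ) = ((∑ v ∈ L, a v : ℕ) : ℝ)
        + ((∑ v ∈ S, a v : ℕ) : ℝ) := by exact_mod_cast hpart a
    linarith [hSaR]
  have H6 : ((∑ v ∈ U, b v : ℕ) : ℝ) - (S.card : ℝ)^2 ≤ 2 * ((∑ v ∈ L, b v : ℕ) : ℝ) := by
    have c1 : ((∑ v ∈ S, b v : ℕ) : ℝ) ≤ (S.card : ℝ) * (S.card : ℝ)
        + ((∑ v ∈ L, b v : ℕ) : ℝ) := by exact_mod_cast F9N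
    have c2 : ((∑ v ∈ U, b v : ℕ) : ℝ) = ((∑ v ∈ L, b v : ℕ) : ℝ)
        + ((∑ v ∈ S, b v : ℕ) : ℝ) := by exact_mod_cast hpart b
    nlinarith [c1, c2]
  have H7 : ((∑ v ∈ U, a v : ℕ) : ℝ) ≤ (S.card : ℝ) * (n:ℝ)/3
      + ((m:ℝ) - (S.card:ℝ)) * (m:ℝ) := by
    have c2 : ((∑ v ∈ U, a v : ℕ) : ℝ) = ((∑ v ∈ L, a v : ℕ) : ℝ)
        + ((∑ v ∈ S, a v : ℕ) : ℝ) := by exact_mod_cast hpart a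
    have c3 : ((∑ v ∈ L, a v : ℕ) : ℝ) ≤ (L.card : ℝ) * (m : ℝ) := by exact_mod_cast hLa
    have c4 : (L.card : ℝ) = (m:ℝ) - (S.card:ℝ) := by linarith [hLSR]
    have c5 : (L.card : ℝ) * (m:ℝ) = ((m:ℝ) - (S.card:ℝ)) * (m:ℝ) := by rw [c4]
    linarith [c2, c3, hSaR, c5]
  exact key_real (n:ℝ) α (m:ℝ) (S.card : ℝ)
    ((∑ v ∈ U, a v : ℕ) : ℝ) ((∑ v ∈ U, b v : ℕ) : ℝ)
    ((∑ v ∈ L, a v : ℕ) : ℝ) ((∑ v ∈ L, b v : ℕ) : ℝ)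
    ((∑ v ∈ L, f v : ℕ) : ℝ)
    hα (Nat.cast_nonneg n) hmR hmnR (Nat.cast_nonneg S.card) H1 H2 H3 H4 H5 H6 H7
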